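/- Let n ≥ 1 and f : (a,b) → ℝ be non-negative. Then the following are equivalent: (i) f is n-times monotone non-decreasing on (a,b); (ii) for every k = 1,...,n, every x ∈ (a,b) and all h₁,...,h_k > 0 with x + h₁ + ... + h_k ∈ (a,b), one has Δ_{h_k}...Δ_{h₁} f(x) ≥ 0; (iii) for every k = 1,...,n, every x ∈ (a,b) and every h > 0 with x + kh ∈ (a,b), one has (Δ_h)^k f(x) ≥ 0. -/

import Mathlib

open Set Filter
open Topology

/-- `f` is `n`-times monotone non-decreasing on `s`. -/
def MultiMonoIncrOn (n : ℕ) (s : Set ℝ) (f : ℝ → ℝ) : Prop :=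
  ((∀ x ∈ s, 0 ≤ f x) ∧ MonotoneOn f s) ∧
  (2 ≤ n → ∃ F : ℕ → ℝ → ℝ, F 0 = f ∧
    (∀ k, k + 1 ≤ n - 2 → ∀ x ∈ s, HasDerivAt (F k) (F (k + 1) x) x) ∧
    ∀ k ≤ n - 2, (∀ x ∈ s, 0 ≤ F k x) ∧ MonotoneOn (F k) s ∧ ConvexOn ℝ s (F k))

/-- Iterated forward difference `Δ_{h_k} ⋯ Δ_{h_1} f` for the list of steps `l`. -/
def iterDiff (f : ℝ → ℝ) : List ℝ → ℝ → ℝ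
  | [] => f
  | h :: t => fun x => iterDiff f t (x + h) - iterDiff f t x

lemma iterDiff_nil (f : ℝ → ℝ) : iterDiff f [] = f := rfl

lemma iterDiff_cons (f : ℝ → ℝ) (h : ℝ) (t : List ℝ) (x : ℝ) :
    iterDiff f (h :: t) x = iterDiff f t (x + h) - iterDiff f t x := rfl

lemma iterDiff_perm (f : ℝ → ℝ) {l l' : List ℝ} (p : l.Perm l') :
    iterDiff f l = iterDiff f l' := by
  induction p with
  | nil => rfl
  | cons h _ ih => funext x; simp only [iterDiff_cons, ih]
  | swap h1 h2 l =>
    funext x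
    simp only [iterDiff_cons]
    have e : x + h2 + h1 = x + h1 + h2 := by ring
    rw [e]; ring
  | trans _ _ ih1 ih2 => exact ih1.trans ih2

lemma iterDiff_cons_eq (f : ℝ → ℝ) (h : ℝ) :
    ∀ (t : List ℝ) (x : ℝ), iterDiff f (h :: t) x = iterDiff (fun y => f (y + h) - f y) t x := by
  intro t
  induction t with
  | nil => intro x; rfl
  | cons h2 t' ih =>
    intro x
    have p : (h :: h2 :: t').Perm (h2 :: h :: t') := List.Perm.swap h2 h t'
    rw [iterDiff_perm f p, iterDiff_cons, ih (x + h2), ih x]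
    rfl

/-- Four point convexity inequality. -/
lemma convex_four {s : Set ℝ} {f : ℝ → ℝ} (hf : ConvexOn ℝ s f) {p q r w : ℝ}
    (hp : p ∈ s) (hw : w ∈ s) (hpq : p ≤ q) (hqw : q ≤ w) (hpr : p ≤ r) (hrw : r ≤ w)
    (hsum : q + r = p + w) : f q + f r ≤ f p + f w := by
  rcases eq_or_lt_of_le (hpq.trans hqw) with he | hpw
  · have hq : q = p := le_antisymm (he ▸ hqw) hpq
    have hr : r = p := le_antisymm (he ▸ hrw) hpr
    rw [hq, hr, ← he]
  · set t : ℝ := (w - q) / (w - p) with ht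
    have hwp : 0 < w - p := by linarith
    have ht0 : 0 ≤ t := by apply div_nonneg <;> linarith
    have ht1 : t ≤ 1 := by rw [div_le_one hwp]; linarith
    have htw : t * (w - p) = w - q := div_mul_cancel₀ _ hwp.ne'
    have hq' : q = t * p + (1 - t) * w := by linear_combination htw
    have hr' : r = (1 - t) * p + t * w := by linear_combination hsum - htw
    have h1 := hf.2 hp hw ht0 (by linarith) (show t + (1 - t) = 1 by ring)
    have h2 := hf.2 hp hw (by linarith) ht0 (show (1 - t) + t = 1 by ring)
    simp only [smul_eq_mul] at h1 h2
    rw [hq', hr']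
    linarith

lemma monotoneOn_delta {a b h : ℝ} {f : ℝ → ℝ} (hf : ConvexOn ℝ (Ioo a b) f) (hh : 0 < h) :
    MonotoneOn (fun x => f (x + h) - f x) (Ioo a (b - h)) := by
  intro x hx y hy hxy
  have hx' : x ∈ Ioo a b := ⟨hx.1, by have := hx.2; linarith⟩
  have hy' : y + h ∈ Ioo a b := ⟨by have := hy.1; linarith, by have := hy.2; linarith⟩
  have := convex_four hf (p := x) (q := x + h) (r := y) (w := y + h) hx' hy'
    (by linarith) (by linarith) (by linarith) (by linarith) (by ring)
  simp only
  linarith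

lemma multiMono_delta {n : ℕ} (hn : 2 ≤ n) {a b h : ℝ} {f : ℝ → ℝ} (hh : 0 < h)
    (hf : MultiMonoIncrOn n (Ioo a b) f) :
    MultiMonoIncrOn (n - 1) (Ioo a (b - h)) (fun x => f (x + h) - f x) := by
  obtain ⟨⟨hpos, hmono⟩, hchain⟩ := hf
  obtain ⟨F, hF0, hFd, hFp⟩ := hchain hn
  have hconv : ConvexOn ℝ (Ioo a b) f := by
    have := (hFp 0 (Nat.zero_le _)).2.2
    rwa [hF0] at this
  have hmem : ∀ x ∈ Ioo a (b - h), x ∈ Ioo a b ∧ x + h ∈ Ioo a b := by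
    intro x hx
    exact ⟨⟨hx.1, by have := hx.2; linarith⟩, ⟨by have := hx.1; linarith, by have := hx.2; linarith⟩⟩
  constructor
  · constructor
    · intro x hx
      obtain ⟨h1, h2⟩ := hmem x hx
      have := hmono h1 h2 (by linarith)
      simpa using this
    · exact monotoneOn_delta hconv hh
  · intro h2n
    have hn3 : 3 ≤ n := by omega
    refine ⟨fun k x => F k (x + h) - F k x, by funext x; show F 0 (x + h) - F 0 x = _; rw [hF0], ?_, ?_⟩
    · intro k hk x hx
      obtain ⟨hx1, hx2⟩ := hmem x hx
      have hd1 := hFd k (by omega) (x + h) hx2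
      have hd2 := hFd k (by omega) x hx1
      exact (hd1.comp_add_const x h).sub hd2
    · intro k hk
      have hk' : k ≤ n - 2 := by omega
      have hk1 : k + 1 ≤ n - 2 := by omega
      have hFk := hFp k hk'
      have hFk1 := hFp (k + 1) hk1
      have hd : ∀ x ∈ Ioo a (b - h),
          HasDerivAt (fun x => F k (x + h) - F k x) (F (k + 1) (x + h) - F (k + 1) x) x := by
        intro x hx
        obtain ⟨hx1, hx2⟩ := hmem x hx
        exact ((hFd k (by omega) (x + h) hx2).comp_add_const x h).sub (hFd k (by omega) x hx1)
      refine ⟨?_, ?_, ?_⟩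
      · intro x hx
        obtain ⟨hx1, hx2⟩ := hmem x hx
        have := hFk.2.1 hx1 hx2 (by linarith)
        simpa using this
      · exact monotoneOn_delta hFk.2.2 hh
      · -- convexity from monotone derivative
        have hint : interior (Ioo a (b - h)) = Ioo a (b - h) := interior_Ioo
        refine MonotoneOn.convexOn_of_deriv (convex_Ioo _ _) ?_ ?_ ?_
        · intro x hx
          exact ((hd x hx).continuousAt).continuousWithinAt
        · rw [hint]
          intro x hx
          exact ((hd x hx).differentiableAt).differentiableWithinAt
        · rw [hint]
          have : ∀ x ∈ Ioo a (b - h),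
              deriv (fun x => F k (x + h) - F k x) x = F (k + 1) (x + h) - F (k + 1) x := by
            intro x hx; exact (hd x hx).deriv
          intro x hx y hy hxy
          rw [this x hx, this y hy]
          exact monotoneOn_delta hFk1.2.2 hh hx hy hxy

lemma sum_pos_of_ne_nil {l : List ℝ} (hl : l ≠ []) (hp : ∀ x ∈ l, 0 < x) : 0 < l.sum :=
  List.sum_pos l hp hl

lemma sum_nonneg_list {l : List ℝ} (hp : ∀ x ∈ l, 0 < x) : 0 ≤ l.sum := by
  induction l with
  | nil => simp
  | cons h t ih =>
    rw [List.sum_cons]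
    have := hp h (List.mem_cons_self)
    have := ih (fun x hx => hp x (List.mem_cons_of_mem _ hx))
    linarith

/-- (i) implies (ii): multimonotone functions have nonnegative iterated differences. -/
lemma multiMono_iterDiff : ∀ (l : List ℝ) (n : ℕ) (a b : ℝ) (f : ℝ → ℝ),
    MultiMonoIncrOn n (Ioo a b) f → l ≠ [] → l.length ≤ n → (∀ h ∈ l, 0 < h) →
    ∀ x ∈ Ioo a b, x + l.sum ∈ Ioo a b → 0 ≤ iterDiff f l x := by
  intro l
  induction l with
  | nil => intro n a b f _ hne; exact absurd rfl hne
  | cons h t ih =>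
    intro n a b f hf _ hlen hpos x hx hxs
    have hh : 0 < h := hpos h (List.mem_cons_self)
    have hpt : ∀ y ∈ t, 0 < y := fun y hy => hpos y (List.mem_cons_of_mem _ hy)
    cases t with
    | nil =>
      have hsum : (h :: ([] : List ℝ)).sum = h := by simp
      rw [hsum] at hxs
      have hle := hf.1.2 hx hxs (by linarith)
      rw [iterDiff_cons, iterDiff_nil]
      linarith
    | cons h2 t' =>
      set t := h2 :: t' with hteq
      have htne : t ≠ [] := by simp [hteq]
      have hts : 0 < t.sum := sum_pos_of_ne_nil htne hpt
      have hsum : (h :: t).sum = h + t.sum := List.sum_cons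
      rw [hsum] at hxs
      have hn2 : 2 ≤ n := by
        have : 1 ≤ t.length := List.length_pos_iff.mpr htne
        simp only [List.length_cons] at hlen
        omega
      have hg := multiMono_delta hn2 hh hf
      rw [iterDiff_cons_eq]
      refine ih (n - 1) a (b - h) _ hg htne ?_ hpt x ?_ ?_
      · simp only [List.length_cons] at hlen ⊢; omega
      · exact ⟨hx.1, by have := hxs.2; linarith⟩
      · constructor
        · have := hx.1; linarith
        · have := hxs.2; linarith

lemma combo_mem {a b x y : ℝ} (hx : x ∈ Ioo a b) (hy : y ∈ Ioo a b) (hxy : x ≤ y)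
    {t : ℝ} (ht0 : 0 ≤ t) (ht1 : t ≤ 1) : t * x + (1 - t) * y ∈ Ioo a b := by
  constructor
  · have h1 : x ≤ t * x + (1 - t) * y := by nlinarith
    have := hx.1; linarith
  · have h2 : t * x + (1 - t) * y ≤ y := by nlinarith
    have := hy.2; linarith

lemma dyadic_convex {a b : ℝ} {f : ℝ → ℝ}
    (hmid : ∀ u v : ℝ, u ∈ Ioo a b → v ∈ Ioo a b → u ≤ v → f ((u + v) / 2) ≤ (f u + f v) / 2) :
    ∀ (m : ℕ) (j : ℕ), j ≤ 2 ^ m → ∀ x y : ℝ, x ∈ Ioo a b → y ∈ Ioo a b → x ≤ y →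
      f ((j / 2 ^ m : ℝ) * x + (1 - j / 2 ^ m) * y)
        ≤ (j / 2 ^ m : ℝ) * f x + (1 - j / 2 ^ m) * f y := by
  intro m
  induction m with
  | zero =>
    intro j hj x y hx hy hxy
    interval_cases j <;> norm_num
  | succ m ihm =>
    intro j hj x y hx hy hxy
    rcases Nat.even_or_odd j with ⟨i, hi⟩ | ⟨i, hi⟩
    · subst hi
      have hi2 : i ≤ 2 ^ m := by
        have : (2:ℕ) ^ (m+1) = 2 * 2 ^ m := by ring
        omega
      have e : ((i + i : ℕ) : ℝ) / 2 ^ (m + 1) = (i : ℝ) / 2 ^ m := by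
        push_cast
        rw [pow_succ]
        have h2 : (2:ℝ) ^ m ≠ 0 := by positivity
        field_simp
        ring
      rw [e]
      exact ihm i hi2 x y hx hy hxy
    · subst hi
      have hi2 : i + 1 ≤ 2 ^ m := by
        have : (2:ℕ) ^ (m+1) = 2 * 2 ^ m := by ring
        omega
      have hi2' : i ≤ 2 ^ m := by omega
      set l1 : ℝ := (i : ℝ) / 2 ^ m with hl1
      set l2 : ℝ := ((i : ℝ) + 1) / 2 ^ m with hl2
      have h2m : (0:ℝ) < 2 ^ m := by positivity
      have hl10 : 0 ≤ l1 := by positivity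
      have hl11 : l1 ≤ 1 := by rw [hl1, div_le_one h2m]; exact_mod_cast hi2'
      have hl20 : 0 ≤ l2 := by positivity
      have hl21 : l2 ≤ 1 := by
        rw [hl2, div_le_one h2m]
        have e : ((i:ℝ) + 1) = ((i + 1 : ℕ) : ℝ) := by push_cast; ring
        rw [e]; exact_mod_cast hi2
      have hl12 : l1 ≤ l2 := by rw [hl1, hl2]; gcongr; linarith
      set z1 : ℝ := l1 * x + (1 - l1) * y with hz1
      set z2 : ℝ := l2 * x + (1 - l2) * y with hz2
      have hz1m : z1 ∈ Ioo a b := combo_mem hx hy hxy hl10 hl11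
      have hz2m : z2 ∈ Ioo a b := combo_mem hx hy hxy hl20 hl21
      have hz21 : z2 ≤ z1 := by rw [hz1, hz2]; nlinarith [sub_nonneg.mpr hxy]
      have key := hmid z2 z1 hz2m hz1m hz21
      have e1 := ihm i hi2' x y hx hy hxy
      have e2 := ihm (i + 1) hi2 x y hx hy hxy
      have ecast : ((i + 1 : ℕ) : ℝ) / 2 ^ m = l2 := by push_cast; rw [hl2]
      rw [ecast] at e2
      rw [← hl1] at e1
      have elam : ((2 * i + 1 : ℕ) : ℝ) / 2 ^ (m + 1) = (l1 + l2) / 2 := by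
        rw [hl1, hl2, pow_succ]
        push_cast
        field_simp
        ring
      have epoint : ((2 * i + 1 : ℕ) : ℝ) / 2 ^ (m + 1) * x
          + (1 - ((2 * i + 1 : ℕ) : ℝ) / 2 ^ (m + 1)) * y = (z2 + z1) / 2 := by
        rw [elam, hz1, hz2]; ring
      rw [epoint, elam]
      linarith

lemma convexOn_of_mono_mid {a b : ℝ} {f : ℝ → ℝ} (hmono : MonotoneOn f (Ioo a b))
    (hmid : ∀ u v : ℝ, u ∈ Ioo a b → v ∈ Ioo a b → u ≤ v → f ((u + v) / 2) ≤ (f u + f v) / 2) :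
    ConvexOn ℝ (Ioo a b) f := by
  have key : ∀ x y : ℝ, x ∈ Ioo a b → y ∈ Ioo a b → x ≤ y → ∀ p : ℝ, 0 ≤ p → p ≤ 1 →
      f (p * x + (1 - p) * y) ≤ p * f x + (1 - p) * f y := by
    intro x y hx hy hxy p hp0 hp1
    set lam : ℕ → ℝ := fun m => (⌊p * 2 ^ m⌋₊ : ℝ) / 2 ^ m with hlam
    have h2m : ∀ m : ℕ, (0:ℝ) < 2 ^ m := fun m => by positivity
    have hlam_le : ∀ m, lam m ≤ p := by
      intro m
      rw [hlam]
      rw [div_le_iff₀ (h2m m)]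
      exact Nat.floor_le (by positivity)
    have hlam0 : ∀ m, 0 ≤ lam m := fun m => by positivity
    have hlam1 : ∀ m, lam m ≤ 1 := fun m => (hlam_le m).trans hp1
    have hjle : ∀ m, ⌊p * 2 ^ m⌋₊ ≤ 2 ^ m := by
      intro m
      have h1 : p * 2 ^ m ≤ (2:ℝ) ^ m := by nlinarith [h2m m]
      have h2 : ((2:ℝ) ^ m) = ((2 ^ m : ℕ) : ℝ) := by push_cast; ring
      calc ⌊p * 2 ^ m⌋₊ ≤ ⌊((2 ^ m : ℕ) : ℝ)⌋₊ := Nat.floor_le_floor (h2 ▸ h1)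
        _ = 2 ^ m := Nat.floor_natCast _
    have hdyad : ∀ m, f (lam m * x + (1 - lam m) * y) ≤ lam m * f x + (1 - lam m) * f y := by
      intro m
      have := dyadic_convex hmid m ⌊p * 2 ^ m⌋₊ (hjle m) x y hx hy hxy
      have e : ((2:ℝ)) ^ m = ((2 ^ m : ℕ) : ℝ) := by push_cast; ring
      simpa [hlam] using this
    have hstep : ∀ m, f (p * x + (1 - p) * y) ≤ lam m * f x + (1 - lam m) * f y := by
      intro m
      refine le_trans ?_ (hdyad m)
      have hle : p * x + (1 - p) * y ≤ lam m * x + (1 - lam m) * y := by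
        nlinarith [sub_nonneg.mpr hxy, sub_nonneg.mpr (hlam_le m)]
      exact hmono (combo_mem hx hy hxy hp0 hp1) (combo_mem hx hy hxy (hlam0 m) (hlam1 m)) hle
    have hlam_tendsto : Tendsto lam atTop (𝓝 p) := by
      have hlow : ∀ m, p - (1/2) ^ m ≤ lam m := by
        intro m
        rw [hlam]
        rw [le_div_iff₀ (h2m m)]
        have := Nat.sub_one_lt_floor (p * 2 ^ m)
        have e : (p - (1/2) ^ m) * 2 ^ m = p * 2 ^ m - 1 := by
          rw [sub_mul, one_div, inv_pow, inv_mul_cancel₀ (h2m m).ne']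
        rw [e]
        linarith
      have h1 : Tendsto (fun m : ℕ => p - (1/2 : ℝ) ^ m) atTop (𝓝 (p - 0)) :=
        tendsto_const_nhds.sub (tendsto_pow_atTop_nhds_zero_of_lt_one (by norm_num) (by norm_num))
      rw [sub_zero] at h1
      exact tendsto_of_tendsto_of_tendsto_of_le_of_le h1 tendsto_const_nhds hlow hlam_le
    have hrhs : Tendsto (fun m => lam m * f x + (1 - lam m) * f y) atTop
        (𝓝 (p * f x + (1 - p) * f y)) := by
      exact ((hlam_tendsto.mul_const (f x)).add
        (((tendsto_const_nhds (x := (1:ℝ))).sub hlam_tendsto).mul_const (f y)))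
    exact ge_of_tendsto hrhs (Eventually.of_forall hstep)
  refine ⟨convex_Ioo a b, ?_⟩
  intro x hx y hy p q hp hq hpq
  simp only [smul_eq_mul]
  have hq' : q = 1 - p := by linarith
  subst hq'
  rcases le_total x y with hxy | hyx
  · exact key x y hx hy hxy p hp (by linarith)
  · have := key y x hy hx hyx (1 - p) (by linarith) (by linarith)
    have e1 : (1 - p) * y + (1 - (1 - p)) * x = p * x + (1 - p) * y := by ring
    have e2 : (1 - p) * f y + (1 - (1 - p)) * f x = p * f x + (1 - p) * f y := by ring
    rw [e1, e2] at this
    exact this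

/-- Equal-step nonnegativity propagates to steps that are positive multiples of `δ`. -/
lemma grid_nonneg {a b : ℝ} {f : ℝ → ℝ} {n : ℕ}
    (hP3 : ∀ k : ℕ, 1 ≤ k → k ≤ n → ∀ h : ℝ, 0 < h → ∀ x ∈ Ioo a b,
      x + k * h ∈ Ioo a b → 0 ≤ iterDiff f (List.replicate k h) x)
    {δ : ℝ} (hδ : 0 < δ) :
    ∀ (N : ℕ) (m : List ℕ), m.sum ≤ N → m ≠ [] → m.length ≤ n → (∀ i ∈ m, 1 ≤ i) →
    ∀ x ∈ Ioo a b, x + (m.sum : ℝ) * δ ∈ Ioo a b →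
    0 ≤ iterDiff f (m.map (fun i : ℕ => (i : ℝ) * δ)) x := by
  intro N
  induction N with
  | zero =>
    intro m hsum hne hlen h1 x hx hxs
    cases m with
    | nil => exact absurd rfl hne
    | cons i t =>
      have := h1 i (List.mem_cons_self)
      simp only [List.sum_cons] at hsum
      omega
  | succ N ihN =>
    intro m hsum hne hlen h1 x hx hxs
    by_cases hall : ∀ i ∈ m, i = 1
    · -- all ones: equal steps
      have hrep : m = List.replicate m.length 1 := List.eq_replicate_of_mem hall
      have hmap : m.map (fun i : ℕ => (i : ℝ) * δ) = List.replicate m.length δ := by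
        rw [hrep]
        simp [List.map_replicate]
      have hsum1 : m.sum = m.length := by
        nth_rewrite 1 [hrep]
        simp [List.sum_replicate]
      rw [hmap]
      have hlen1 : 1 ≤ m.length := List.length_pos_iff.mpr hne
      refine hP3 m.length hlen1 hlen δ hδ x hx ?_
      rw [← hsum1]
      exact hxs
    · push_neg at hall
      obtain ⟨i, him, hi1⟩ := hall
      have hi2 : 2 ≤ i := by have := h1 i him; omega
      set t := m.erase i with hterase
      have hperm : m.Perm (i :: t) := List.perm_cons_erase him
      have hsum_eq : m.sum = i + t.sum := by rw [hperm.sum_eq, List.sum_cons]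
      have hlen_eq : m.length = t.length + 1 := by
        rw [hperm.length_eq, List.length_cons]
      have ht1 : ∀ j ∈ t, 1 ≤ j := fun j hj => h1 j (List.mem_of_mem_erase hj)
      have hmp : (m.map (fun i : ℕ => (i : ℝ) * δ)).Perm ((i:ℝ) * δ :: t.map (fun i : ℕ => (i : ℝ) * δ)) := by
        have := hperm.map (fun i : ℕ => (i:ℝ) * δ)
        simpa using this
      rw [iterDiff_perm f hmp]
      -- split: Δ_{iδ} = Δ_{(i-1)δ} ∘ shift δ + Δ_δ
      set T := iterDiff f (t.map (fun i : ℕ => (i : ℝ) * δ)) with hT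
      have hsplit : iterDiff f ((i:ℝ) * δ :: t.map (fun i : ℕ => (i : ℝ) * δ)) x
          = iterDiff f (((i - 1 : ℕ):ℝ) * δ :: t.map (fun i : ℕ => (i : ℝ) * δ)) (x + δ)
            + iterDiff f (δ :: t.map (fun i : ℕ => (i : ℝ) * δ)) x := by
        rw [iterDiff_cons, iterDiff_cons, iterDiff_cons, ← hT]
        have e1 : x + δ + ((i - 1 : ℕ):ℝ) * δ = x + (i:ℝ) * δ := by
          have : ((i - 1 : ℕ):ℝ) = (i:ℝ) - 1 := by
            have : 1 ≤ i := by omega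
            push_cast [this]
            ring
          rw [this]; ring
        rw [e1]
        ring
      rw [hsplit]
      have hts_pos : 0 ≤ (t.sum : ℝ) * δ := by positivity
      have hNδpos : 0 < (m.sum : ℝ) * δ := by
        have : 1 ≤ m.sum := by omega
        have h1' : (1:ℝ) ≤ (m.sum : ℝ) := by exact_mod_cast this
        nlinarith
      have hax := hx.1
      have hbx := hx.2
      have haxs := hxs.1
      have hbxs := hxs.2
      -- first term
      have hterm1 : 0 ≤ iterDiff f (((i - 1 : ℕ):ℝ) * δ :: t.map (fun j : ℕ => (j : ℝ) * δ)) (x + δ) := by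
        have hl : ((i - 1) :: t).map (fun j : ℕ => (j:ℝ) * δ)
            = ((i - 1 : ℕ):ℝ) * δ :: t.map (fun j : ℕ => (j : ℝ) * δ) := by simp
        rw [← hl]
        refine ihN ((i - 1) :: t) ?_ (by simp) ?_ ?_ (x + δ) ?_ ?_
        · simp only [List.sum_cons]; omega
        · simp only [List.length_cons]; omega
        · intro j hj
          rcases List.mem_cons.mp hj with rfl | hj'
          · omega
          · exact ht1 j hj'
        · constructor
          · linarith
          · have hle : x + δ ≤ x + (m.sum : ℝ) * δ := by
              have : (1:ℝ) ≤ (m.sum : ℝ) := by exact_mod_cast (by omega : 1 ≤ m.sum)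
              nlinarith
            linarith
        · have h1' : ((i - 1) :: t).sum = m.sum - 1 := by
            simp only [List.sum_cons]; omega
          have e : x + δ + ((((i - 1) :: t).sum : ℕ) : ℝ) * δ = x + (m.sum : ℝ) * δ := by
            rw [h1']
            have e2 : ((m.sum - 1 : ℕ) : ℝ) = (m.sum : ℝ) - 1 := by
              have h3 : 1 ≤ m.sum := by omega
              push_cast [h3]
              ring
            rw [e2]; ring
          rw [e]
          exact hxs
      -- second term
      have hterm2 : 0 ≤ iterDiff f (δ :: t.map (fun j : ℕ => (j : ℝ) * δ)) x := by
        have hl : ((1 :: t).map (fun j : ℕ => (j:ℝ) * δ))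
            = δ :: t.map (fun j : ℕ => (j : ℝ) * δ) := by simp
        rw [← hl]
        refine ihN (1 :: t) ?_ (by simp) ?_ ?_ x hx ?_
        · simp only [List.sum_cons]; omega
        · simp only [List.length_cons]; omega
        · intro j hj
          rcases List.mem_cons.mp hj with rfl | hj'
          · omega
          · exact ht1 j hj'
        · constructor
          · have : (0:ℝ) ≤ (((1 :: t).sum : ℕ) : ℝ) * δ := by positivity
            linarith
          · have hle : (((1 :: t).sum : ℕ) : ℝ) * δ ≤ (m.sum : ℝ) * δ := by
              have h1' : (1 :: t).sum ≤ m.sum := by simp only [List.sum_cons]; omega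
              have : (((1 :: t).sum : ℕ) : ℝ) ≤ (m.sum : ℝ) := by exact_mod_cast h1'
              nlinarith
            linarith
      linarith

/-- All "sub-multisets" of a list, as a list. -/
def subs : List ℝ → List (List ℝ)
  | [] => [[]]
  | h :: t => ((subs t).map (h :: ·)) ++ subs t

lemma list_sum_neg' (L : List (List ℝ)) (g : List ℝ → ℝ) :
    (L.map (fun s => -(g s))).sum = -((L.map g).sum) := by
  induction L with
  | nil => simp
  | cons i t ih => simp only [List.map_cons, List.sum_cons, ih]; ring

lemma iterDiff_eq_sum (f : ℝ → ℝ) :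
    ∀ (l : List ℝ) (x : ℝ), iterDiff f l x
      = (((subs l).map (fun s => (-1 : ℝ) ^ (l.length + s.length) * f (x + s.sum))).sum) := by
  intro l
  induction l with
  | nil => intro x; simp [subs, iterDiff_nil]
  | cons h t ih =>
    intro x
    rw [iterDiff_cons, ih (x + h), ih x]
    simp only [subs, List.map_append, List.sum_append, List.map_map]
    have e1 : ∀ s : List ℝ, (-1 : ℝ) ^ ((h :: t).length + (h :: s).length)
        = (-1 : ℝ) ^ (t.length + s.length) := by
      intro s
      simp only [List.length_cons]
      have : t.length + 1 + (s.length + 1) = (t.length + s.length) + 2 := by ring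
      rw [this, pow_add]
      norm_num
    have e2 : ∀ s : List ℝ, (-1 : ℝ) ^ ((h :: t).length + s.length)
        = -(-1 : ℝ) ^ (t.length + s.length) := by
      intro s
      simp only [List.length_cons]
      have : t.length + 1 + s.length = (t.length + s.length) + 1 := by ring
      rw [this, pow_succ]
      ring
    have hmap1 : ((subs t).map fun s => (-1:ℝ) ^ ((h :: t).length + (h :: s).length)
          * f (x + (h :: s).sum)).sum
        = ((subs t).map fun s => (-1:ℝ) ^ (t.length + s.length) * f (x + h + s.sum)).sum := by
      congr 1
      apply List.map_congr_left
      intro s _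
      rw [e1 s]
      congr 2
      simp [List.sum_cons]
      ring
    have hmap2 : ((subs t).map fun s => (-1:ℝ) ^ ((h :: t).length + s.length)
          * f (x + s.sum)).sum
        = -((subs t).map fun s => (-1:ℝ) ^ (t.length + s.length) * f (x + s.sum)).sum := by
      rw [← list_sum_neg' (subs t) (fun s => (-1:ℝ) ^ (t.length + s.length) * f (x + s.sum))]
      congr 1
      apply List.map_congr_left
      intro s _
      rw [e2 s]
      ring
    rw [Function.comp_def] at *
    rw [hmap1, hmap2]
    ring

lemma subs_mem_sum_nonneg {l : List ℝ} (hl : ∀ h ∈ l, 0 ≤ h) :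
    ∀ s ∈ subs l, 0 ≤ s.sum ∧ s.sum ≤ l.sum := by
  induction l with
  | nil => intro s hs; simp [subs] at hs; simp [hs]
  | cons h t ih =>
    intro s hs
    have hh : 0 ≤ h := hl h (List.mem_cons_self)
    have ht : ∀ y ∈ t, 0 ≤ y := fun y hy => hl y (List.mem_cons_of_mem _ hy)
    simp only [subs, List.mem_append, List.mem_map] at hs
    rcases hs with ⟨s', hs', rfl⟩ | hs
    · obtain ⟨h1, h2⟩ := ih ht s' hs'
      simp only [List.sum_cons]
      constructor <;> linarith
    · obtain ⟨h1, h2⟩ := ih ht s hs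
      simp only [List.sum_cons]
      constructor <;> linarith

lemma subs_mem_subset {l : List ℝ} : ∀ s ∈ subs l, ∀ y ∈ s, y ∈ l := by
  induction l with
  | nil => intro s hs; simp [subs] at hs; simp [hs]
  | cons h t ih =>
    intro s hs y hy
    simp only [subs, List.mem_append, List.mem_map] at hs
    rcases hs with ⟨s', hs', rfl⟩ | hs
    · rcases List.mem_cons.mp hy with rfl | hy'
      · exact List.mem_cons_self
      · exact List.mem_cons_of_mem _ (ih s' hs' y hy')
    · exact List.mem_cons_of_mem _ (ih s hs y hy)

lemma subs_map (g : ℝ → ℝ) : ∀ l : List ℝ, subs (l.map g) = (subs l).map (List.map g) := by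
  intro l
  induction l with
  | nil => simp [subs]
  | cons h t ih =>
    simp only [List.map_cons, subs, ih, List.map_append, List.map_map]
    congr 1

lemma tendsto_list_sum' {ι : Type*} (L : List ι) (F : ι → ℕ → ℝ) (g : ι → ℝ)
    (h : ∀ i ∈ L, Tendsto (fun q => F i q) atTop (𝓝 (g i))) :
    Tendsto (fun q => (L.map (fun i => F i q)).sum) atTop (𝓝 ((L.map g).sum)) := by
  induction L with
  | nil => simp only [List.map_nil, List.sum_nil]; exact tendsto_const_nhds
  | cons i t ih =>
    simp only [List.map_cons, List.sum_cons]
    exact (h i (List.mem_cons_self)).add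
      (ih (fun j hj => h j (List.mem_cons_of_mem _ hj)))

lemma eventually_list_all (l : List ℝ) (P : ℝ → ℕ → Prop)
    (h : ∀ y ∈ l, ∀ᶠ q in atTop, P y q) : ∀ᶠ q in atTop, ∀ y ∈ l, P y q := by
  induction l with
  | nil => exact Eventually.of_forall (by simp)
  | cons y t ih =>
    have h1 := h y (List.mem_cons_self)
    have h2 := ih (fun z hz => h z (List.mem_cons_of_mem _ hz))
    filter_upwards [h1, h2] with q hq1 hq2
    intro z hz
    rcases List.mem_cons.mp hz with rfl | hz'
    · exact hq1
    · exact hq2 z hz'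

lemma floor_sum_le (c : ℝ) (hc : 0 < c) : ∀ l : List ℝ, (∀ h ∈ l, 0 ≤ h) →
    (((l.map (fun h => ⌊h * c⌋₊)).sum : ℕ) : ℝ) ≤ c * l.sum := by
  intro l
  induction l with
  | nil => simp
  | cons h t ih =>
    intro hp
    have hh : 0 ≤ h := hp h (List.mem_cons_self)
    have ht := ih (fun y hy => hp y (List.mem_cons_of_mem _ hy))
    simp only [List.map_cons, List.sum_cons]
    have h1 : ((⌊h * c⌋₊ : ℕ) : ℝ) ≤ h * c := Nat.floor_le (by positivity)
    push_cast at ht h1 ⊢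
    nlinarith

/-- From equal-step nonnegativity and continuity to arbitrary-step nonnegativity. -/
lemma P2_of_P3 {a b : ℝ} {f : ℝ → ℝ} {n : ℕ} (hcont : ContinuousOn f (Ioo a b))
    (hP3 : ∀ k : ℕ, 1 ≤ k → k ≤ n → ∀ h : ℝ, 0 < h → ∀ x ∈ Ioo a b,
      x + k * h ∈ Ioo a b → 0 ≤ iterDiff f (List.replicate k h) x) :
    ∀ l : List ℝ, l ≠ [] → l.length ≤ n → (∀ h ∈ l, 0 < h) →
    ∀ x ∈ Ioo a b, x + l.sum ∈ Ioo a b → 0 ≤ iterDiff f l x := by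
  intro l hne hlen hpos x hx hxs
  set φ : ℕ → ℝ → ℝ := fun q h => (⌊h * (q + 1)⌋₊ : ℝ) / (q + 1) with hφ
  have hq1pos : ∀ q : ℕ, (0:ℝ) < (q:ℝ) + 1 := fun q => by positivity
  have hlsum : 0 ≤ l.sum := sum_nonneg_list hpos
  -- nonnegativity of the approximants
  have key : ∀ q : ℕ, (∀ h ∈ l, 1 ≤ ⌊h * ((q:ℝ) + 1)⌋₊) → 0 ≤ iterDiff f (l.map (φ q)) x := by
    intro q hq
    set δ : ℝ := 1 / ((q:ℝ) + 1) with hδ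
    have hδpos : 0 < δ := by positivity
    set m : List ℕ := l.map (fun h => ⌊h * ((q:ℝ) + 1)⌋₊) with hm
    have hmapeq : l.map (φ q) = m.map (fun i : ℕ => (i : ℝ) * δ) := by
      rw [hm, List.map_map]
      apply List.map_congr_left
      intro h _
      simp only [Function.comp_apply, hφ, hδ]
      rw [div_eq_mul_one_div]
    rw [hmapeq]
    have hmsum : ((m.sum : ℕ) : ℝ) * δ ≤ l.sum := by
      have h1 := floor_sum_le ((q:ℝ) + 1) (hq1pos q) l (fun h hh => (hpos h hh).le)
      rw [hm, hδ]
      rw [mul_one_div, div_le_iff₀ (hq1pos q)]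
      calc ((l.map (fun h => ⌊h * ((q:ℝ)+1)⌋₊)).sum : ℝ) ≤ ((q:ℝ)+1) * l.sum := h1
        _ = l.sum * ((q:ℝ)+1) := by ring
    refine grid_nonneg hP3 hδpos m.sum m le_rfl ?_ ?_ ?_ x hx ?_
    · rw [hm]
      simpa using hne
    · rw [hm, List.length_map]; exact hlen
    · intro i hi
      rw [hm] at hi
      obtain ⟨h, hh, rfl⟩ := List.mem_map.mp hi
      exact hq h hh
    · constructor
      · have : (0:ℝ) ≤ (m.sum : ℝ) * δ := by positivity
        have := hx.1; linarith
      · have := hxs.2; linarith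
  -- convergence of the approximants
  have hφt : ∀ h ∈ l, Tendsto (fun q : ℕ => φ q h) atTop (𝓝 h) := by
    intro h hh
    have hhp : 0 < h := hpos h hh
    have hup : ∀ q : ℕ, φ q h ≤ h := by
      intro q
      rw [hφ]
      simp only
      rw [div_le_iff₀ (hq1pos q)]
      exact Nat.floor_le (by positivity)
    have hlow : ∀ q : ℕ, h - 1 / ((q:ℝ) + 1) ≤ φ q h := by
      intro q
      rw [hφ]
      simp only
      rw [le_div_iff₀ (hq1pos q)]
      have h1 : h * ((q:ℝ)+1) - 1 < (⌊h * ((q:ℝ)+1)⌋₊ : ℝ) := Nat.sub_one_lt_floor _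
      have e : (h - 1 / ((q:ℝ) + 1)) * ((q:ℝ)+1) = h * ((q:ℝ)+1) - 1 := by
        field_simp
      rw [e]
      linarith
    have ht1 : Tendsto (fun q : ℕ => h - 1 / ((q:ℝ) + 1)) atTop (𝓝 (h - 0)) :=
      tendsto_const_nhds.sub tendsto_one_div_add_atTop_nhds_zero_nat
    rw [sub_zero] at ht1
    exact tendsto_of_tendsto_of_tendsto_of_le_of_le ht1 tendsto_const_nhds hlow hup
  have htendsto : Tendsto (fun q => iterDiff f (l.map (φ q)) x) atTop (𝓝 (iterDiff f l x)) := by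
    have hL : ∀ q : ℕ, iterDiff f (l.map (φ q)) x
        = ((subs l).map (fun s => (-1:ℝ) ^ (l.length + s.length) * f (x + (s.map (φ q)).sum))).sum := by
      intro q
      rw [iterDiff_eq_sum, subs_map, List.map_map]
      congr 1
      apply List.map_congr_left
      intro s _
      simp only [Function.comp_apply, List.length_map]
    have hR : iterDiff f l x
        = ((subs l).map (fun s => (-1:ℝ) ^ (l.length + s.length) * f (x + s.sum))).sum :=
      iterDiff_eq_sum f l x
    rw [hR]
    have := tendsto_list_sum' (subs l)
      (fun s q => (-1:ℝ) ^ (l.length + s.length) * f (x + (s.map (φ q)).sum))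
      (fun s => (-1:ℝ) ^ (l.length + s.length) * f (x + s.sum)) ?_
    · exact Tendsto.congr (fun q => (hL q).symm) this
    · intro s hs
      obtain ⟨hs0, hs1⟩ := subs_mem_sum_nonneg (fun h hh => (hpos h hh).le) s hs
      have hmem : x + s.sum ∈ Ioo a b := by
        constructor
        · have := hx.1; linarith
        · have := hxs.2; linarith
      have hfc : ContinuousAt f (x + s.sum) :=
        (hcont.continuousAt (isOpen_Ioo.mem_nhds hmem))
      have hinner : Tendsto (fun q : ℕ => x + (s.map (φ q)).sum) atTop (𝓝 (x + s.sum)) := by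
        have hsum : Tendsto (fun q : ℕ => (s.map (fun h => φ q h)).sum) atTop (𝓝 ((s.map id).sum)) := by
          apply tendsto_list_sum' s (fun h q => φ q h) id
          intro h hh
          exact hφt h (subs_mem_subset s hs h hh)
        rw [List.map_id] at hsum
        exact tendsto_const_nhds.add hsum
      exact (hfc.tendsto.comp hinner).const_mul _
  -- eventual validity
  have hev : ∀ᶠ q : ℕ in atTop, ∀ h ∈ l, 1 ≤ ⌊h * ((q:ℝ) + 1)⌋₊ := by
    apply eventually_list_all
    intro h hh
    have hhp : 0 < h := hpos h hh
    rw [eventually_atTop]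
    refine ⟨⌈1/h⌉₊, fun q hq => ?_⟩
    apply Nat.le_floor
    rw [Nat.cast_one]
    have h1 : (1:ℝ)/h ≤ (⌈1/h⌉₊ : ℝ) := Nat.le_ceil _
    have h2 : ((⌈1/h⌉₊ : ℕ) : ℝ) ≤ (q:ℝ) := by exact_mod_cast hq
    have h3 : (1:ℝ)/h ≤ (q:ℝ) + 1 := by linarith
    have h4 := mul_le_mul_of_nonneg_left h3 hhp.le
    rw [mul_one_div, div_self hhp.ne'] at h4
    linarith
  exact ge_of_tendsto htendsto (hev.mono key)

lemma iterDiff_three (f : ℝ → ℝ) (h y : ℝ) :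
    iterDiff f (List.replicate 3 h) y
      = f (y + h + h + h) - 3 * f (y + h + h) + 3 * f (y + h) - f y := by
  show iterDiff f (h :: h :: h :: []) y = _
  simp only [iterDiff_cons, iterDiff_nil]
  ring

lemma convex_P3_hasDerivAt {a b : ℝ} {f : ℝ → ℝ} (hconv : ConvexOn ℝ (Ioo a b) f)
    (hcont : ContinuousOn f (Ioo a b))
    (hcube : ∀ h : ℝ, 0 < h → ∀ y ∈ Ioo a b, y + 3 * h ∈ Ioo a b →
      0 ≤ iterDiff f (List.replicate 3 h) y) :
    ∀ x₀ ∈ Ioo a b, HasDerivAt f (sInf (slope f x₀ '' Ioo x₀ b)) x₀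
      ∧ sInf (slope f x₀ '' Ioo x₀ b) = sSup (slope f x₀ '' Ioo a x₀) := by
  intro x₀ hx₀
  obtain ⟨hax, hxb⟩ := hx₀
  set B := sInf (slope f x₀ '' Ioo x₀ b) with hB
  set A := sSup (slope f x₀ '' Ioo a x₀) with hA
  have hneR : (Ioo x₀ b).Nonempty := nonempty_Ioo.mpr hxb
  have hneL : (Ioo a x₀).Nonempty := nonempty_Ioo.mpr hax
  have hmemR : ∀ y ∈ Ioo x₀ b, y ∈ Ioo a b := fun y hy => ⟨hax.trans hy.1, hy.2⟩
  have hmemL : ∀ y ∈ Ioo a x₀, y ∈ Ioo a b := fun y hy => ⟨hy.1, hy.2.trans hxb⟩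
  have hsec : ∀ u v : ℝ, u ∈ Ioo a b → v ∈ Ioo a b → u ≠ x₀ → v ≠ x₀ → u ≤ v →
      slope f x₀ u ≤ slope f x₀ v := by
    intro u v hu hv hu' hv' huv
    rw [slope_def_field, slope_def_field]
    exact hconv.secant_mono ⟨hax, hxb⟩ hu hv hu' hv' huv
  have monoR : MonotoneOn (slope f x₀) (Ioo x₀ b) := by
    intro u hu v hv huv
    exact hsec u v (hmemR u hu) (hmemR v hv) (ne_of_gt hu.1) (ne_of_gt hv.1) huv
  have monoL : MonotoneOn (slope f x₀) (Ioo a x₀) := by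
    intro u hu v hv huv
    exact hsec u v (hmemL u hu) (hmemL v hv) (ne_of_lt hu.2) (ne_of_lt hv.2) huv
  have cross : ∀ u ∈ Ioo a x₀, ∀ v ∈ Ioo x₀ b, slope f x₀ u ≤ slope f x₀ v := by
    intro u hu v hv
    exact hsec u v (hmemL u hu) (hmemR v hv) (ne_of_lt hu.2) (ne_of_gt hv.1)
      (hu.2.trans hv.1).le
  obtain ⟨u₀, hu₀⟩ : (Ioo a x₀).Nonempty := nonempty_Ioo.mpr hax
  obtain ⟨v₀, hv₀⟩ : (Ioo x₀ b).Nonempty := nonempty_Ioo.mpr hxb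
  have bddR : BddBelow (slope f x₀ '' Ioo x₀ b) := by
    refine ⟨slope f x₀ u₀, ?_⟩
    rintro _ ⟨v, hv, rfl⟩
    exact cross u₀ hu₀ v hv
  have bddL : BddAbove (slope f x₀ '' Ioo a x₀) := by
    refine ⟨slope f x₀ v₀, ?_⟩
    rintro _ ⟨u, hu, rfl⟩
    exact cross u hu v₀ hv₀
  have hAB : A ≤ B := by
    apply le_csInf (hneR.image _)
    rintro _ ⟨v, hv, rfl⟩
    apply csSup_le (hneL.image _)
    rintro _ ⟨u, hu, rfl⟩
    exact cross u hu v hv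
  have hcontx : ContinuousAt f x₀ := hcont.continuousAt (isOpen_Ioo.mem_nhds ⟨hax, hxb⟩)
  have hBA : B ≤ A := by
    have claim : ∀ c ∈ Ioo x₀ b, 2 * B - A ≤ slope f x₀ c := by
      intro c hc
      set h₀ : ℝ := min ((x₀ - a) / 2) ((c - x₀) / 4) with hh₀
      have hh₀pos : 0 < h₀ := by
        apply lt_min
        · linarith [hc.1]
        · linarith [hc.1]
      have key : ∀ h ∈ Ioo (0:ℝ) h₀,
          2 * B - A ≤ (f c - f (x₀ + h)) / (c - (x₀ + h)) := by
        intro h hh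
        obtain ⟨hhpos, hhlt⟩ := hh
        have hha : h < x₀ - a := by
          have := min_le_left ((x₀ - a) / 2) ((c - x₀) / 4)
          rw [← hh₀] at this
          linarith
        have hhc : 2 * h < c - x₀ := by
          have := min_le_right ((x₀ - a) / 2) ((c - x₀) / 4)
          rw [← hh₀] at this
          linarith
        have hcb : c < b := hc.2
        have hm1 : x₀ - h ∈ Ioo a b := ⟨by linarith, by linarith⟩
        have hm2 : x₀ - h + 3 * h ∈ Ioo a b := ⟨by linarith, by linarith⟩
        have hcu := hcube h hhpos (x₀ - h) hm1 hm2
        rw [iterDiff_three] at hcu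
        have e1 : x₀ - h + h + h + h = x₀ + 2 * h := by ring
        have e2 : x₀ - h + h + h = x₀ + h := by ring
        have e3 : x₀ - h + h = x₀ := by ring
        rw [e1, e2, e3] at hcu
        -- bounds on the three slopes
        have s1 : B * h ≤ f (x₀ + h) - f x₀ := by
          have hmem : x₀ + h ∈ Ioo x₀ b := ⟨by linarith, by linarith⟩
          have hle : B ≤ slope f x₀ (x₀ + h) := csInf_le bddR ⟨x₀ + h, hmem, rfl⟩
          rw [slope_def_field] at hle
          have e : x₀ + h - x₀ = h := by ring
          rw [e] at hle
          rw [le_div_iff₀ hhpos] at hle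
          linarith
        have hne : (h:ℝ) ≠ 0 := ne_of_gt hhpos
        have s2 : f x₀ - f (x₀ - h) ≤ A * h := by
          have hmem : x₀ - h ∈ Ioo a x₀ := ⟨by linarith, by linarith⟩
          have hle : slope f x₀ (x₀ - h) ≤ A := le_csSup bddL ⟨x₀ - h, hmem, rfl⟩
          rw [slope_def_field] at hle
          have e : (f (x₀ - h) - f x₀) / (x₀ - h - x₀) = (f x₀ - f (x₀ - h)) / h := by
            rw [show x₀ - h - x₀ = -h from by ring, div_neg, ← neg_div]
            congr 1
            ring
          rw [e, div_le_iff₀ hhpos] at hle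
          exact hle
        set S : ℝ := (f c - f (x₀ + h)) / (c - (x₀ + h)) with hS
        have s3 : f (x₀ + 2 * h) - f (x₀ + h) ≤ S * h := by
          have hm1' : x₀ + h ∈ Ioo a b := ⟨by linarith, by linarith⟩
          have hm2' : x₀ + 2 * h ∈ Ioo a b := ⟨by linarith, by linarith⟩
          have hm3' : c ∈ Ioo a b := ⟨by linarith [hc.1], hc.2⟩
          have hne1 : x₀ + 2 * h ≠ x₀ + h := by intro hcon; apply hne; linarith
          have hne2 : c ≠ x₀ + h := by intro hcon; linarith
          have hsec3 := hconv.secant_mono hm1' hm2' hm3' hne1 hne2 (by linarith)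
          rw [show x₀ + 2 * h - (x₀ + h) = h from by ring] at hsec3
          rw [div_le_iff₀ hhpos] at hsec3
          rw [← hS] at hsec3
          exact hsec3
        -- combine with the cubic inequality
        have hcomb : (2 * B - A) * h ≤ S * h := by nlinarith
        exact le_of_mul_le_mul_right hcomb hhpos
      -- pass to the limit h → 0⁺
      have hlim : Tendsto (fun h : ℝ => (f c - f (x₀ + h)) / (c - (x₀ + h)))
          (𝓝[>] (0:ℝ)) (𝓝 ((f c - f x₀) / (c - x₀))) := by
        have h1 : Tendsto (fun h : ℝ => x₀ + h) (𝓝[>] (0:ℝ)) (𝓝 x₀) := by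
          have hcadd : Continuous (fun h : ℝ => x₀ + h) := continuous_const.add continuous_id
          have h1' := hcadd.tendsto (0:ℝ)
          rw [add_zero] at h1'
          exact h1'.mono_left nhdsWithin_le_nhds
        have h2 : Tendsto (fun h : ℝ => f (x₀ + h)) (𝓝[>] (0:ℝ)) (𝓝 (f x₀)) :=
          hcontx.tendsto.comp h1
        apply Tendsto.div (tendsto_const_nhds.sub h2) (tendsto_const_nhds.sub h1)
        intro hcon
        have : c = x₀ := by linarith [sub_eq_zero.mp hcon]
        linarith [hc.1]
      have hev : ∀ᶠ h : ℝ in 𝓝[>] (0:ℝ),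
          2 * B - A ≤ (f c - f (x₀ + h)) / (c - (x₀ + h)) := by
        filter_upwards [Ioo_mem_nhdsGT hh₀pos] with h hh
        exact key h hh
      have := ge_of_tendsto hlim hev
      rw [slope_def_field]
      exact this
    have h2BA : 2 * B - A ≤ B := by
      apply le_csInf (hneR.image _)
      rintro _ ⟨c, hc, rfl⟩
      exact claim c hc
    linarith
  have hEq : B = A := le_antisymm hBA hAB
  refine ⟨?_, hEq⟩
  rw [hasDerivAt_iff_tendsto_slope]
  have hsplit : 𝓝[≠] x₀ = 𝓝[<] x₀ ⊔ 𝓝[>] x₀ := by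
    rw [← nhdsWithin_union, Iio_union_Ioi]
  rw [hsplit, tendsto_sup]
  constructor
  · rw [hEq]
    exact MonotoneOn.tendsto_nhdsWithin_Ioo_left hneL monoL bddL
  · exact MonotoneOn.tendsto_nhdsWithin_Ioo_right hneR monoR bddR

lemma hasDerivAt_iterDiff {a b : ℝ} {f f1 : ℝ → ℝ}
    (hd : ∀ y ∈ Ioo a b, HasDerivAt f (f1 y) y) :
    ∀ l : List ℝ, (∀ h ∈ l, 0 < h) → ∀ x, x ∈ Ioo a b → x + l.sum ∈ Ioo a b →
    HasDerivAt (fun y => iterDiff f l y) (iterDiff f1 l x) x := by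
  intro l
  induction l with
  | nil => intro _ x hx _; exact hd x hx
  | cons h t ih =>
    intro hpos x hx hxs
    have hh : 0 < h := hpos h (List.mem_cons_self)
    have hpt : ∀ y ∈ t, 0 < y := fun y hy => hpos y (List.mem_cons_of_mem _ hy)
    have ht0 : 0 ≤ t.sum := sum_nonneg_list hpt
    rw [List.sum_cons] at hxs
    have hx1 : x + h ∈ Ioo a b := ⟨by have := hx.1; linarith, by have := hxs.2; linarith⟩
    have hm1 : (x + h) + t.sum ∈ Ioo a b := by
      constructor
      · have := hxs.1; linarith
      · have := hxs.2; linarith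
    have hm2 : x + t.sum ∈ Ioo a b := by
      constructor
      · have := hx.1; linarith
      · have := hxs.2; linarith
    have hd1 := ih hpt (x + h) hx1 hm1
    have hd2 := ih hpt x hx hm2
    exact (hd1.comp_add_const x h).sub hd2

lemma deriv_diffs_nonneg {a b : ℝ} {f f1 : ℝ → ℝ} {n : ℕ}
    (hd : ∀ y ∈ Ioo a b, HasDerivAt f (f1 y) y)
    (hP2 : ∀ l : List ℝ, l ≠ [] → l.length ≤ n → (∀ h ∈ l, 0 < h) →
      ∀ x ∈ Ioo a b, x + l.sum ∈ Ioo a b → 0 ≤ iterDiff f l x) :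
    ∀ l : List ℝ, l.length + 1 ≤ n → (∀ h ∈ l, 0 < h) →
    ∀ x ∈ Ioo a b, x + l.sum ∈ Ioo a b → 0 ≤ iterDiff f1 l x := by
  intro l hlen hpos x hx hxs
  have ht0 : 0 ≤ l.sum := sum_nonneg_list hpos
  have hG : HasDerivAt (fun y => iterDiff f l y) (iterDiff f1 l x) x :=
    hasDerivAt_iterDiff hd l hpos x hx hxs
  rw [hasDerivAt_iff_tendsto_slope] at hG
  have hsub : Ioi x ⊆ {x}ᶜ := fun y hy => (ne_of_gt hy)
  have hG' : Tendsto (slope (fun y => iterDiff f l y) x) (𝓝[>] x) (𝓝 (iterDiff f1 l x)) :=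
    hG.mono_left (nhdsWithin_mono x hsub)
  apply ge_of_tendsto hG'
  have hxm : x < b - l.sum := by have := hxs.2; linarith
  filter_upwards [Ioo_mem_nhdsGT hxm] with y hy
  have hyx : 0 < y - x := by have := hy.1; linarith
  rw [slope_def_field]
  apply div_nonneg _ hyx.le
  have hsplit : iterDiff f ((y - x) :: l) x
      = iterDiff f l y - iterDiff f l x := by
    rw [iterDiff_cons]
    congr 2
    ring
  rw [← hsplit]
  refine hP2 ((y - x) :: l) (by simp) ?_ ?_ x hx ?_
  · simp only [List.length_cons]; omega
  · intro z hz
    rcases List.mem_cons.mp hz with rfl | hz'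
    · exact hyx
    · exact hpos z hz'
  · rw [List.sum_cons]
    constructor
    · have := hx.1; linarith
    · have := hy.2; linarith

lemma iterDiff_one (f : ℝ → ℝ) (h y : ℝ) :
    iterDiff f (List.replicate 1 h) y = f (y + h) - f y := rfl

lemma iterDiff_two (f : ℝ → ℝ) (h y : ℝ) :
    iterDiff f (List.replicate 2 h) y = f (y + h + h) - 2 * f (y + h) + f y := by
  show iterDiff f (h :: h :: []) y = _
  simp only [iterDiff_cons, iterDiff_nil]
  ring

lemma multiMono_of_P3 : ∀ n : ℕ, 1 ≤ n → ∀ (a b : ℝ) (f : ℝ → ℝ),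
    (∀ x ∈ Ioo a b, 0 ≤ f x) →
    (∀ k : ℕ, 1 ≤ k → k ≤ n → ∀ h : ℝ, 0 < h → ∀ x ∈ Ioo a b, x + k * h ∈ Ioo a b →
      0 ≤ iterDiff f (List.replicate k h) x) →
    MultiMonoIncrOn n (Ioo a b) f := by
  intro n
  induction n with
  | zero => omega
  | succ n ih =>
    intro _ a b f hf hP3
    have hmono : MonotoneOn f (Ioo a b) := by
      intro x hx y hy hxy
      rcases eq_or_lt_of_le hxy with rfl | hlt
      · exact le_rfl
      · have hmem : x + ((1:ℕ):ℝ) * (y - x) ∈ Ioo a b := by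
          rw [show x + ((1:ℕ):ℝ) * (y - x) = y from by push_cast; ring]
          exact hy
        have h1 := hP3 1 le_rfl (by omega) (y - x) (by linarith) x hx hmem
        rw [iterDiff_one, show x + (y - x) = y from by ring] at h1
        linarith
    by_cases hn1 : n = 0
    · subst hn1
      exact ⟨⟨hf, hmono⟩, fun h2 => absurd h2 (by omega)⟩
    have hn : 1 ≤ n := by omega
    have hmid : ∀ u v : ℝ, u ∈ Ioo a b → v ∈ Ioo a b → u ≤ v →
        f ((u + v) / 2) ≤ (f u + f v) / 2 := by
      intro u v hu hv huv
      rcases eq_or_lt_of_le huv with rfl | hlt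
      · rw [show (u + u) / 2 = u from by ring]
        linarith
      · set h : ℝ := (v - u) / 2 with hh
        have hpos : 0 < h := by rw [hh]; linarith
        have hmem : u + ((2:ℕ):ℝ) * h ∈ Ioo a b := by
          rw [show u + ((2:ℕ):ℝ) * h = v from by rw [hh]; push_cast; ring]
          exact hv
        have h2 := hP3 2 (by omega) (by omega) h hpos u hu hmem
        rw [iterDiff_two, show u + h + h = v from by rw [hh]; ring,
          show u + h = (u + v) / 2 from by rw [hh]; ring] at h2
        linarith
    have hconv : ConvexOn ℝ (Ioo a b) f := convexOn_of_mono_mid hmono hmid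
    by_cases hn2 : n = 1
    · subst hn2
      refine ⟨⟨hf, hmono⟩, fun _ => ⟨fun _ => f, rfl, ?_, ?_⟩⟩
      · intro k hk
        omega
      · intro k _
        exact ⟨hf, hmono, hconv⟩
    have hn32 : 2 ≤ n := by omega
    have hcont : ContinuousOn f (Ioo a b) := hconv.continuousOn isOpen_Ioo
    have hP2 := P2_of_P3 hcont hP3
    have hcube : ∀ h : ℝ, 0 < h → ∀ y ∈ Ioo a b, y + 3 * h ∈ Ioo a b →
        0 ≤ iterDiff f (List.replicate 3 h) y := by
      intro h hh y hy hm
      refine hP3 3 (by omega) (by omega) h hh y hy ?_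
      push_cast
      exact hm
    have hder := convex_P3_hasDerivAt hconv hcont hcube
    have hd : ∀ y ∈ Ioo a b, HasDerivAt f (deriv f y) y := by
      intro y hy
      have h1 := (hder y hy).1
      rw [h1.deriv]
      exact h1
    have hf1nonneg : ∀ y ∈ Ioo a b, 0 ≤ deriv f y := by
      intro y hy
      have := deriv_diffs_nonneg hd hP2 [] (by simp) (by simp) y hy (by simpa)
      simpa [iterDiff_nil] using this
    have hf1P3 : ∀ k : ℕ, 1 ≤ k → k ≤ n → ∀ h : ℝ, 0 < h → ∀ x ∈ Ioo a b,
        x + k * h ∈ Ioo a b → 0 ≤ iterDiff (deriv f) (List.replicate k h) x := by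
      intro k hk1 hkn h hh x hx hxs
      refine deriv_diffs_nonneg hd hP2 (List.replicate k h) ?_ ?_ x hx ?_
      · rw [List.length_replicate]; omega
      · intro z hz
        rw [List.eq_of_mem_replicate hz]
        exact hh
      · rw [List.sum_replicate, nsmul_eq_mul]
        exact hxs
    have hM1 := ih hn a b (deriv f) hf1nonneg hf1P3
    obtain ⟨⟨hg0, hgmono⟩, hgchain⟩ := hM1
    obtain ⟨F', hF'0, hF'd, hF'p⟩ := hgchain hn32
    refine ⟨⟨hf, hmono⟩, fun _ =>
      ⟨fun k => Nat.casesOn (motive := fun _ => ℝ → ℝ) k f (fun j => F' j), rfl, ?_, ?_⟩⟩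
    · intro k hk x hx
      cases k with
      | zero =>
        show HasDerivAt f (F' 0 x) x
        rw [hF'0]
        exact hd x hx
      | succ j =>
        show HasDerivAt (F' j) (F' (j + 1) x) x
        refine hF'd j ?_ x hx
        omega
    · intro k hk
      cases k with
      | zero => exact ⟨hf, hmono, hconv⟩
      | succ j =>
        show (∀ x ∈ Ioo a b, 0 ≤ F' j x) ∧ MonotoneOn (F' j) (Ioo a b) ∧ ConvexOn ℝ (Ioo a b) (F' j)
        refine hF'p j ?_
        omega


/-- Characterization of `n`-times monotone non-decreasing functions via iterated
difference operators (McNeil–Nešlehová). -/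
theorem multimono_iff_differences (n : ℕ) (hn : 1 ≤ n) (a b : ℝ) (hab : a < b)
    (f : ℝ → ℝ) (hf : ∀ x ∈ Set.Ioo a b, 0 ≤ f x) :
    (MultiMonoIncrOn n (Set.Ioo a b) f ↔
      (∀ k, 1 ≤ k → k ≤ n → ∀ l : List ℝ, l.length = k → (∀ h ∈ l, 0 < h) →
        ∀ x ∈ Set.Ioo a b, x + l.sum ∈ Set.Ioo a b → 0 ≤ iterDiff f l x)) ∧
    (MultiMonoIncrOn n (Set.Ioo a b) f ↔
      (∀ k, 1 ≤ k → k ≤ n → ∀ h : ℝ, 0 < h →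
        ∀ x ∈ Set.Ioo a b, x + k * h ∈ Set.Ioo a b →
          0 ≤ iterDiff f (List.replicate k h) x)) := by
  constructor
  · constructor
    · intro hM k hk1 hkn l hlen hpos x hx hxs
      refine multiMono_iterDiff l n a b f hM ?_ ?_ hpos x hx hxs
      · apply List.ne_nil_of_length_pos
        omega
      · omega
    · intro hP2
      apply multiMono_of_P3 n hn a b f hf
      intro k hk1 hkn h hh x hx hxs
      refine hP2 k hk1 hkn (List.replicate k h) List.length_replicate ?_ x hx ?_
      · intro z hz
        rw [List.eq_of_mem_replicate hz]
        exact hh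
      · rw [List.sum_replicate, nsmul_eq_mul]
        exact hxs
  · constructor
    · intro hM k hk1 hkn h hh x hx hxs
      refine multiMono_iterDiff (List.replicate k h) n a b f hM ?_ ?_ ?_ x hx ?_
      · apply List.ne_nil_of_length_pos
        rw [List.length_replicate]
        omega
      · rw [List.length_replicate]
        exact hkn
      · intro z hz
        rw [List.eq_of_mem_replicate hz]
        exact hh
      · rw [List.sum_replicate, nsmul_eq_mul]
        exact hxs
    · intro hP3
      exact multiMono_of_P3 n hn a b f hf hP3
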